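/- Suppose under gradient descent with the NLL loss on softmax regression, an allowed logit z_ι(t) satisfies z_ι(t) ≥ z_ι(0) and for another allowed index j with initial probability ratio c = p_j(0)/p_ι(0) > 1 the ratio p_j(t)/p_ι(t) ≥ c for all t. Then z_j(T) ≥ z_j(0) - c·z_ι(0) + c·z_ι(T) for all T, and if z_ι(t) → ∞ then exp(z_ι(t) - z_j(t)) → 0, i.e. the limiting probability ratio p_ι/p_j tends to 0. -/
import Mathlib


open Filter Topology

noncomputable def softmax {m : ℕ} (z : Fin m → ℝ) (i : Fin m) : ℝ :=
  Real.exp (z i) / ∑ k, Real.exp (z k)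

/-- under NLL gradient descent, with `c = p_j(0)/p_ι(0) > 1` and the
ratio `p_j(t)/p_ι(t) ≥ c` maintained, the allowed logit satisfies
`z_j(T) ≥ z_j(0) - c z_ι(0) + c z_ι(T)`, and if `z_ι(t) → ∞` then
`exp(z_ι(t) - z_j(t)) → 0`. -/
theorem nll_ratio_lower_bound {m : ℕ} (y : Fin m → ℝ)
    (hy : ∀ i, y i = 0 ∨ y i = 1)
    (lam : ℝ) (hlam : 0 < lam)
    (z : ℕ → Fin m → ℝ)
    (p : ℕ → Fin m → ℝ) (hp : ∀ t, p t = softmax (z t))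
    (phat : ℕ → ℝ) (hphat : ∀ t, phat t = ∑ i, y i * p t i)
    (hphat0 : ∀ t, 0 < phat t) (hphat1 : ∀ t, phat t < 1)
    (j ι : Fin m) (hj : y j = 1) (hι : y ι = 1)
    (hupdj : ∀ T, z T j = z 0 j
      + lam * ∑ t ∈ Finset.range T, (1 / phat t - 1) * p t j)
    (hupdι : ∀ T, z T ι = z 0 ι
      + lam * ∑ t ∈ Finset.range T, (1 / phat t - 1) * p t ι)
    (c : ℝ) (hc : c = p 0 j / p 0 ι) (hc1 : 1 < c)
    (hratio : ∀ t, c ≤ p t j / p t ι) :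
    (∀ T, z 0 j - c * z 0 ι + c * z T ι ≤ z T j) ∧
    (Tendsto (fun t => z t ι) atTop atTop →
      Tendsto (fun t => Real.exp (z t ι - z t j)) atTop (𝓝 0)) := by
  have hpos : ∀ t k, 0 < p t k := by
    intro t k
    rw [hp, softmax]
    apply div_pos (Real.exp_pos _)
    exact Finset.sum_pos (fun i _ => Real.exp_pos _) ⟨k, Finset.mem_univ k⟩
  have hkey : ∀ t, c * p t ι ≤ p t j := by
    intro t
    have := hratio t
    rw [le_div_iff₀ (hpos t ι)] at this
    exact this
  have hfac : ∀ t, (0:ℝ) ≤ 1 / phat t - 1 := by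
    intro t
    have : 1 ≤ 1 / phat t := one_le_one_div (hphat0 t) (hphat1 t).le
    linarith
  have hmain : ∀ T, z 0 j - c * z 0 ι + c * z T ι ≤ z T j := by
    intro T
    rw [hupdj T, hupdι T]
    have hsum : ∑ t ∈ Finset.range T, (1 / phat t - 1) * (c * p t ι)
        ≤ ∑ t ∈ Finset.range T, (1 / phat t - 1) * p t j := by
      apply Finset.sum_le_sum
      intro t _
      exact mul_le_mul_of_nonneg_left (hkey t) (hfac t)
    have h2 : c * ∑ t ∈ Finset.range T, (1 / phat t - 1) * p t ι
        ≤ ∑ t ∈ Finset.range T, (1 / phat t - 1) * p t j := by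
      rw [Finset.mul_sum]
      calc ∑ t ∈ Finset.range T, c * ((1 / phat t - 1) * p t ι)
          = ∑ t ∈ Finset.range T, (1 / phat t - 1) * (c * p t ι) := by
            apply Finset.sum_congr rfl; intro t _; ring
        _ ≤ _ := hsum
    nlinarith [h2, hlam.le]
  refine ⟨hmain, fun hT => ?_⟩
  have hbound : ∀ t, z t ι - z t j ≤ (1 - c) * z t ι + (c * z 0 ι - z 0 j) := by
    intro t
    have := hmain t
    nlinarith
  have hbot : Tendsto (fun t => z t ι - z t j) atTop atBot := by
    apply tendsto_atBot_mono hbound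
    have h1 : Tendsto (fun t => (1 - c) * z t ι) atTop atBot := by
      have : (1 - c) < 0 := by linarith
      exact Tendsto.const_mul_atTop_of_neg this hT
    exact tendsto_atBot_add_const_right atTop _ h1
  exact Real.tendsto_exp_atBot.comp hbot
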